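/- The number of partitions κ = (κ_1 ≥ ... ≥ κ_m ≥ 0) of degree |κ| = 2k with at most m parts, weighted by dim F_n^κ = Π_{1≤i<j≤n}(κ_i − κ_j + j − i)/(j − i) (extending κ by zeros to n parts), satisfies Σ_{|κ|=2k, ℓ(κ)≤m} dim F_n^κ ≤ (2k+1)^{m²} · binomial(n+2k, 2k)^m. -/

import Mathlib

open scoped Classical

/-- Extension of a partition with at most `m` parts to `n` parts by appending zeros. -/
def extPart (m n : ℕ) (κ : Fin m → ℕ) (i : Fin n) : ℕ :=
  if h : (i : ℕ) < m then κ ⟨i, h⟩ else 0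

/-- Weyl dimension formula for `GL(n,ℝ)`:
`dim F_n^κ = Π_{1 ≤ i < j ≤ n} (κ_i − κ_j + j − i)/(j − i)`, with `κ` extended by zeros. -/
noncomputable def dimF (m n : ℕ) (κ : Fin m → ℕ) : ℝ :=
  ∏ i : Fin n, ∏ j : Fin n,
    if (i : ℕ) < (j : ℕ) then
      (((extPart m n κ i : ℝ) - (extPart m n κ j : ℝ) + ((j : ℕ) : ℝ) - ((i : ℕ) : ℝ)) /
        (((j : ℕ) : ℝ) - ((i : ℕ) : ℝ)))
    else 1

/-- The set of partitions `κ_1 ≥ ... ≥ κ_m ≥ 0` of degree `2k` with at most `m` parts. -/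
noncomputable def partitionSet (m k : ℕ) : Finset (Fin m → ℕ) :=
  (Fintype.piFinset fun _ : Fin m => Finset.range (2 * k + 1)).filter
    fun κ => (∀ i j : Fin m, i ≤ j → κ j ≤ κ i) ∧ ∑ i, κ i = 2 * k

lemma prodRatio (t : ℕ) : ∀ N : ℕ,
    ∏ l ∈ Finset.range N, (((t : ℝ) + l + 1) / ((l : ℝ) + 1)) = ((t + N).choose N : ℝ)
  | 0 => by simp
  | (N + 1) => by
    have hN : ((N : ℝ) + 1) ≠ 0 := by positivity
    have h : (t + N).choose N * (t + N + 1) = (t + N + 1).choose (N + 1) * (N + 1) := by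
      have := Nat.add_one_mul_choose_eq (t + N) N
      rw [mul_comm]
      exact this
    rw [Finset.prod_range_succ, prodRatio t N, mul_div_assoc', div_eq_iff hN]
    exact_mod_cast h

lemma chooseMono (n : ℕ) {t s : ℕ} (h : t ≤ s) : (t + n).choose t ≤ (s + n).choose s := by
  induction h with
  | refl => exact le_refl _
  | @step s' _ ih =>
    calc (t + n).choose t ≤ (s' + n).choose s' := ih
    _ ≤ (s' + 1 + n).choose (s' + 1) := by
        have he : s' + 1 + n = (s' + n) + 1 := by omega
        rw [he, Nat.choose_succ_succ]
        omega

lemma one_le_prod_real {α : Type*} {s : Finset α} {f : α → ℝ} (h : ∀ i ∈ s, 1 ≤ f i) :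
    1 ≤ ∏ i ∈ s, f i := by
  have := Finset.prod_le_prod (s := s) (f := fun _ => (1 : ℝ)) (g := f)
    (fun i _ => zero_le_one) h
  simpa using this

lemma prod_le_const_pow_real {α : Type*} {s : Finset α} {f : α → ℝ} {b : ℝ}
    (h0 : ∀ i ∈ s, 0 ≤ f i) (h : ∀ i ∈ s, f i ≤ b) : ∏ i ∈ s, f i ≤ b ^ s.card := by
  calc ∏ i ∈ s, f i ≤ ∏ _i ∈ s, b := Finset.prod_le_prod h0 h
  _ = b ^ s.card := Finset.prod_const b

lemma dimF_bound (m n k : ℕ) (hmn : m ≤ n) (κ : Fin m → ℕ)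
    (hmono : ∀ i j : Fin m, i ≤ j → κ j ≤ κ i) (hle : ∀ i, κ i ≤ 2 * k) :
    dimF m n κ ≤ (((2 * k + 1 : ℕ) : ℝ)) ^ (m * (m - 1)) * (((n + 2 * k).choose (2 * k)) : ℝ) ^ m := by
  set C : ℝ := (((n + 2 * k).choose (2 * k)) : ℝ) with hC
  have hC1 : (1 : ℝ) ≤ C := by
    have h : 1 ≤ (n + 2 * k).choose (2 * k) := Nat.choose_pos (by omega)
    rw [hC]
    exact_mod_cast h
  have h2k1 : (1 : ℝ) ≤ ((2 * k + 1 : ℕ) : ℝ) := by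
    exact_mod_cast Nat.one_le_iff_ne_zero.mpr (by omega)
  set f : Fin n → Fin n → ℝ := fun i j =>
    if (i : ℕ) < (j : ℕ) then
      (((extPart m n κ i : ℝ) - (extPart m n κ j : ℝ) + ((j : ℕ) : ℝ) - ((i : ℕ) : ℝ)) /
        (((j : ℕ) : ℝ) - ((i : ℕ) : ℝ)))
    else 1 with hf
  have hdim : dimF m n κ = ∏ i : Fin n, ∏ j : Fin n, f i j := rfl
  have he_mono : ∀ i j : Fin n, (i : ℕ) ≤ (j : ℕ) → extPart m n κ j ≤ extPart m n κ i := by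
    intro i j hij
    unfold extPart
    split_ifs with h1 h2
    · exact hmono ⟨i, h2⟩ ⟨j, h1⟩ hij
    · exact absurd (Nat.lt_of_le_of_lt hij h1) h2
    · exact Nat.zero_le _
    · exact le_refl 0
  have he_le : ∀ i : Fin n, extPart m n κ i ≤ 2 * k := by
    intro i
    unfold extPart
    split_ifs with h1
    · exact hle _
    · omega
  have he_zero : ∀ i : Fin n, m ≤ (i : ℕ) → extPart m n κ i = 0 := by
    intro i hi
    unfold extPart
    rw [dif_neg (by omega)]
  have hf_one : ∀ i j : Fin n, 1 ≤ f i j := by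
    intro i j
    rw [hf]
    dsimp only
    split_ifs with h
    · have hd : (0 : ℝ) < ((j : ℕ) : ℝ) - ((i : ℕ) : ℝ) := by
        have : ((i : ℕ) : ℝ) < ((j : ℕ) : ℝ) := by exact_mod_cast h
        linarith
      rw [le_div_iff₀ hd, one_mul]
      have h1 := he_mono i j (le_of_lt h)
      have h2 : ((extPart m n κ j : ℕ) : ℝ) ≤ ((extPart m n κ i : ℕ) : ℝ) := by exact_mod_cast h1
      linarith
    · exact le_refl 1
  have hf_nonneg : ∀ i j : Fin n, 0 ≤ f i j := fun i j => le_trans zero_le_one (hf_one i j)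
  have hf_le : ∀ i j : Fin n, f i j ≤ if (i : ℕ) < (j : ℕ) then ((2 * k + 1 : ℕ) : ℝ) else 1 := by
    intro i j
    rw [hf]
    dsimp only
    split_ifs with h
    · have hd : (0 : ℝ) < ((j : ℕ) : ℝ) - ((i : ℕ) : ℝ) := by
        have : ((i : ℕ) : ℝ) < ((j : ℕ) : ℝ) := by exact_mod_cast h
        linarith
      rw [div_le_iff₀ hd]
      have h1 : ((extPart m n κ i : ℕ) : ℝ) ≤ 2 * k := by exact_mod_cast he_le i
      have h2 : (0 : ℝ) ≤ ((extPart m n κ j : ℕ) : ℝ) := by positivity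
      have h3 : (1 : ℝ) ≤ ((j : ℕ) : ℝ) - ((i : ℕ) : ℝ) := by
        have h4 : (i : ℕ) + 1 ≤ (j : ℕ) := h
        have h5 : (((i : ℕ) : ℝ)) + 1 ≤ ((j : ℕ) : ℝ) := by exact_mod_cast h4
        linarith
      push_cast
      nlinarith
    · exact le_refl 1
  have hrow_triv : ∀ i : Fin n, m ≤ (i : ℕ) → ∏ j : Fin n, f i j = 1 := by
    intro i hi
    apply Finset.prod_eq_one
    intro j _
    rw [hf]
    dsimp only
    split_ifs with h
    · rw [he_zero i hi, he_zero j (by omega)]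
      have hd : ((j : ℕ) : ℝ) - ((i : ℕ) : ℝ) ≠ 0 := by
        have : ((i : ℕ) : ℝ) < ((j : ℕ) : ℝ) := by exact_mod_cast h
        linarith
      have he : ((0 : ℕ) : ℝ) - ((0 : ℕ) : ℝ) + ((j : ℕ) : ℝ) - ((i : ℕ) : ℝ)
          = ((j : ℕ) : ℝ) - ((i : ℕ) : ℝ) := by push_cast; ring
      rw [he, div_self hd]
    · rfl
  have hcard : (Finset.univ.filter (fun i : Fin n => (i : ℕ) < m)).card ≤ m := by
    have h := Finset.card_le_card_of_injOn (f := fun j : Fin n => (j : ℕ))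
      (s := Finset.univ.filter (fun i : Fin n => (i : ℕ) < m)) (t := Finset.range m)
      (by intro j hj
          simpa using hj)
      (by intro a _ b _ hab; exact Fin.val_injective hab)
    simpa using h
  -- row bound for i < m
  have hrow : ∀ i : Fin n, (i : ℕ) < m →
      ∏ j : Fin n, f i j ≤ ((2 * k + 1 : ℕ) : ℝ) ^ (m - 1) * C := by
    intro i him
    rw [← Finset.prod_filter_mul_prod_filter_not Finset.univ (fun j : Fin n => (j : ℕ) < m)]
    apply mul_le_mul
    · have hiA : i ∈ Finset.univ.filter (fun j : Fin n => (j : ℕ) < m) := by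
        simp only [Finset.mem_filter, Finset.mem_univ, true_and]; exact him
      have hfb : ∀ j : Fin n, f i j ≤ ((2 * k + 1 : ℕ) : ℝ) := by
        intro j
        refine (hf_le i j).trans ?_
        split_ifs
        · exact le_refl _
        · exact h2k1
      have hii : f i i = 1 := by rw [hf]; dsimp only; rw [if_neg (lt_irrefl _)]
      calc ∏ j ∈ Finset.univ.filter (fun j : Fin n => (j : ℕ) < m), f i j
          = (∏ j ∈ (Finset.univ.filter (fun j : Fin n => (j : ℕ) < m)).erase i, f i j)
              * f i i := (Finset.prod_erase_mul _ _ hiA).symm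
        _ = ∏ j ∈ (Finset.univ.filter (fun j : Fin n => (j : ℕ) < m)).erase i, f i j := by
            rw [hii, mul_one]
        _ ≤ ((2 * k + 1 : ℕ) : ℝ) ^
              ((Finset.univ.filter (fun j : Fin n => (j : ℕ) < m)).erase i).card :=
            prod_le_const_pow_real (fun j _ => hf_nonneg i j) (fun j _ => hfb j)
        _ ≤ ((2 * k + 1 : ℕ) : ℝ) ^ (m - 1) := by
            apply pow_le_pow_right₀ h2k1
            rw [Finset.card_erase_of_mem hiA]
            have := hcard
            omega
    · -- tail part ≤ C
      set t := extPart m n κ i with ht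
      have htk : t ≤ 2 * k := he_le i
      set g : ℕ → ℝ := fun a => ((t : ℝ) + (a : ℝ) - ((i : ℕ) : ℝ)) / ((a : ℝ) - ((i : ℕ) : ℝ)) with hg
      have hg_one : ∀ a, (i : ℕ) < a → 1 ≤ g a := by
        intro a ha
        rw [hg]
        dsimp only
        have hd : (0 : ℝ) < (a : ℝ) - ((i : ℕ) : ℝ) := by
          have : ((i : ℕ) : ℝ) < (a : ℝ) := by exact_mod_cast ha
          linarith
        rw [le_div_iff₀ hd, one_mul]
        have ht0 : (0 : ℝ) ≤ (t : ℝ) := by positivity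
        linarith
      have step1 : ∏ j ∈ Finset.univ.filter (fun j : Fin n => ¬ (j : ℕ) < m), f i j
          = ∏ a ∈ Finset.Ico m n, g a := by
        have himg : (Finset.univ.filter (fun j : Fin n => ¬ (j : ℕ) < m)).image
            (fun j : Fin n => (j : ℕ)) = Finset.Ico m n := by
          ext a
          simp only [Finset.mem_image, Finset.mem_filter, Finset.mem_univ, true_and,
            Finset.mem_Ico, not_lt]
          constructor
          · rintro ⟨j, hj, rfl⟩; exact ⟨hj, j.isLt⟩
          · rintro ⟨h1, h2⟩; exact ⟨⟨a, h2⟩, h1, rfl⟩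
        rw [← himg, Finset.prod_image (by intro a _ b _ hab; exact Fin.val_injective hab)]
        apply Finset.prod_congr rfl
        intro j hj
        simp only [Finset.mem_filter, Finset.mem_univ, true_and, not_lt] at hj
        rw [hf, hg]
        dsimp only
        rw [if_pos (by omega : (i : ℕ) < (j : ℕ)), he_zero j hj, ← ht]
        push_cast
        ring_nf
      have step2 : ∏ a ∈ Finset.Ico m n, g a ≤ ∏ a ∈ Finset.Ico ((i : ℕ) + 1) n, g a := by
        rw [← Finset.prod_Ico_consecutive g (show (i : ℕ) + 1 ≤ m by omega) hmn]
        apply le_mul_of_one_le_left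
        · apply Finset.prod_nonneg
          intro a ha
          rw [Finset.mem_Ico] at ha
          exact le_trans zero_le_one (hg_one a (by omega))
        · apply one_le_prod_real
          intro a ha
          rw [Finset.mem_Ico] at ha
          exact hg_one a (by omega)
      have step3 : ∏ a ∈ Finset.Ico ((i : ℕ) + 1) n, g a
          = ((t + (n - ((i : ℕ) + 1))).choose (n - ((i : ℕ) + 1)) : ℝ) := by
        rw [Finset.prod_Ico_eq_prod_range, ← prodRatio t (n - ((i : ℕ) + 1))]
        apply Finset.prod_congr rfl
        intro l _
        rw [hg]
        dsimp only
        have e1 : ((((i : ℕ) + 1 + l) : ℕ) : ℝ) - ((i : ℕ) : ℝ) = (l : ℝ) + 1 := by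
          push_cast; ring
        rw [e1]
        congr 1
        push_cast; ring
      have step4 : ((t + (n - ((i : ℕ) + 1))).choose (n - ((i : ℕ) + 1)) : ℕ)
          ≤ (n + 2 * k).choose (2 * k) := by
        set N := n - ((i : ℕ) + 1) with hN
        have hNn : N ≤ n := by omega
        have e2 : (t + N).choose N = (t + N).choose t := by
          have := Nat.choose_symm (show t ≤ t + N by omega) (n := t + N)
          rw [show t + N - t = N by omega] at this
          exact this
        calc (t + N).choose N = (t + N).choose t := e2
          _ ≤ (t + n).choose t := Nat.choose_le_choose t (by omega)
          _ ≤ (2 * k + n).choose (2 * k) := chooseMono n htk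
          _ = (n + 2 * k).choose (2 * k) := by rw [Nat.add_comm]
      calc ∏ j ∈ Finset.univ.filter (fun j : Fin n => ¬ (j : ℕ) < m), f i j
          = ∏ a ∈ Finset.Ico m n, g a := step1
        _ ≤ ∏ a ∈ Finset.Ico ((i : ℕ) + 1) n, g a := step2
        _ = ((t + (n - ((i : ℕ) + 1))).choose (n - ((i : ℕ) + 1)) : ℝ) := step3
        _ ≤ C := by rw [hC]; exact_mod_cast step4
    · apply Finset.prod_nonneg
      intro j _
      exact hf_nonneg i j
    · positivity
  -- assemble rows
  have hbase : (1 : ℝ) ≤ ((2 * k + 1 : ℕ) : ℝ) ^ (m - 1) * C := by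
    have h1 : (1 : ℝ) ≤ ((2 * k + 1 : ℕ) : ℝ) ^ (m - 1) := by
      calc (1 : ℝ) = 1 ^ (m - 1) := (one_pow _).symm
      _ ≤ ((2 * k + 1 : ℕ) : ℝ) ^ (m - 1) := pow_le_pow_left₀ zero_le_one h2k1 _
    nlinarith
  rw [hdim, ← Finset.prod_filter_mul_prod_filter_not Finset.univ (fun i : Fin n => (i : ℕ) < m)]
  have htriv : ∏ i ∈ Finset.univ.filter (fun i : Fin n => ¬ (i : ℕ) < m), ∏ j : Fin n, f i j = 1 := by
    apply Finset.prod_eq_one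
    intro i hi
    simp only [Finset.mem_filter, Finset.mem_univ, true_and, not_lt] at hi
    exact hrow_triv i hi
  rw [htriv, mul_one]
  calc ∏ i ∈ Finset.univ.filter (fun i : Fin n => (i : ℕ) < m), ∏ j : Fin n, f i j
      ≤ ∏ i ∈ Finset.univ.filter (fun i : Fin n => (i : ℕ) < m),
          (((2 * k + 1 : ℕ) : ℝ) ^ (m - 1) * C) := by
        apply Finset.prod_le_prod
        · intro i _
          apply Finset.prod_nonneg
          intro j _
          exact hf_nonneg i j
        · intro i hi
          simp only [Finset.mem_filter, Finset.mem_univ, true_and] at hi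
          exact hrow i hi
    _ = (((2 * k + 1 : ℕ) : ℝ) ^ (m - 1) * C) ^ (Finset.univ.filter (fun i : Fin n => (i : ℕ) < m)).card := by
        rw [Finset.prod_const]
    _ ≤ (((2 * k + 1 : ℕ) : ℝ) ^ (m - 1) * C) ^ m := pow_le_pow_right₀ hbase hcard
    _ = ((2 * k + 1 : ℕ) : ℝ) ^ (m * (m - 1)) * C ^ m := by
        rw [mul_pow, ← pow_mul, Nat.mul_comm (m - 1) m]

/-- `Σ_{|κ|=2k, ℓ(κ)≤m} dim F_n^κ ≤ (2k+1)^{m²} · C(n+2k, 2k)^m`. -/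
theorem stmt17 (m n k : ℕ) (hm : 1 ≤ m) (hmn : m ≤ n) :
    ∑ κ ∈ partitionSet m k, dimF m n κ ≤
      ((2 * (k : ℝ) + 1)) ^ (m ^ 2) * ((n + 2 * k).choose (2 * k) : ℝ) ^ m := by
  set B : ℝ := (((2 * k + 1 : ℕ) : ℝ)) ^ (m * (m - 1)) * (((n + 2 * k).choose (2 * k)) : ℝ) ^ m
    with hB
  have hBnn : 0 ≤ B := by rw [hB]; positivity
  have hterm : ∀ κ ∈ partitionSet m k, dimF m n κ ≤ B := by
    intro κ hκ
    rw [partitionSet, Finset.mem_filter] at hκ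
    obtain ⟨hpi, hmono, _⟩ := hκ
    rw [Fintype.mem_piFinset] at hpi
    exact dimF_bound m n k hmn κ hmono (fun i => by
      have := hpi i; rw [Finset.mem_range] at this; omega)
  have hsum : ∑ κ ∈ partitionSet m k, dimF m n κ ≤ (partitionSet m k).card • B :=
    Finset.sum_le_card_nsmul _ _ _ hterm
  have hcard : (partitionSet m k).card ≤ (2 * k + 1) ^ m := by
    calc (partitionSet m k).card
        ≤ (Fintype.piFinset fun _ : Fin m => Finset.range (2 * k + 1)).card :=
          Finset.card_filter_le _ _
      _ = (2 * k + 1) ^ m := by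
          rw [Fintype.card_piFinset]
          simp [Finset.card_range]
  calc ∑ κ ∈ partitionSet m k, dimF m n κ
      ≤ (partitionSet m k).card • B := hsum
    _ = ((partitionSet m k).card : ℝ) * B := nsmul_eq_mul _ _
    _ ≤ (((2 * k + 1) ^ m : ℕ) : ℝ) * B := by
        apply mul_le_mul_of_nonneg_right _ hBnn
        exact_mod_cast hcard
    _ = ((2 * (k : ℝ) + 1)) ^ (m ^ 2) * ((n + 2 * k).choose (2 * k) : ℝ) ^ m := by
        rw [hB]
        obtain ⟨m', rfl⟩ : ∃ m', m = m' + 1 := ⟨m - 1, by omega⟩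
        push_cast
        rw [← mul_assoc, ← pow_add, show m' + 1 + (m' + 1) * m' = (m' + 1) ^ 2 by ring]
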